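/- arXiv:2106.14266 — 6 statements merged into one kernel-verified Lean document; each statement's English description precedes it below -/
import Mathlib

section
/- Let Q(x,y) be the negated Cayley-Menger polynomial of the five points of a four-sided cone K₁ with lateral edges p, q, r, s, base edges c, f, h, g and diagonals x, y (so Q(x,y) = x²y² - 2(s²+q²)x²y - 2(p²+r²)xy² + (s²-q²)²x² + (p²-r²)²y² + ...). If c² = q² + p² + (q/s)(g² - p² - s²) and f² = q² + r² + (q/s)(h² - r² - s²), then Q(x,y) is divisible by the linear factor (y - (q - s)²). -/
/-- At `y = (q - s)^2`, under the given relations for `c^2` and `f^2`, the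
Cayley–Menger matrix has the explicit kernel vector
`(q*s*(s-q), q-s, 0, s, 0, -q)`, hence its determinant vanishes. -/
lemma cayley_menger_det_zero_at_root
    (p q r s c f g h x : ℝ) (hs : 0 < s)
    (hc2 : c ^ 2 = q ^ 2 + p ^ 2 + (q / s) * (g ^ 2 - p ^ 2 - s ^ 2))
    (hf2 : f ^ 2 = q ^ 2 + r ^ 2 + (q / s) * (h ^ 2 - r ^ 2 - s ^ 2)) :
      (Matrix.det !![(0 : ℝ), 1, 1, 1, 1, 1;
                      1, 0, p ^ 2, q ^ 2, r ^ 2, s ^ 2;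
                      1, p ^ 2, 0, c ^ 2, x, g ^ 2;
                      1, q ^ 2, c ^ 2, 0, f ^ 2, (q-s)^2;
                      1, r ^ 2, x, f ^ 2, 0, h ^ 2;
                      1, s ^ 2, g ^ 2, (q-s)^2, h ^ 2, 0]) = 0 := by
  have hs0 : s ≠ 0 := ne_of_gt hs
  have h5 : (5 : Fin 6) = Fin.succ 4 := rfl
  rw [← Matrix.exists_mulVec_eq_zero_iff]
  refine ⟨![q*s*(s-q), q-s, 0, s, 0, -q], ?_, ?_⟩
  · intro hzero
    have : (![q*s*(s-q), q-s, 0, s, 0, -q] : Fin 6 → ℝ) 3 = 0 := by rw [hzero]; rfl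
    simp at this
    exact hs0 this
  · funext i
    fin_cases i <;>
      · simp only [Matrix.mulVec, dotProduct, Fin.sum_univ_six, h5,
          Matrix.cons_val_zero, Matrix.cons_val_one, Matrix.cons_val_two,
          Matrix.cons_val_three, Matrix.cons_val_four, Matrix.cons_val_succ,
          Matrix.cons_val', Matrix.of_apply, Matrix.vecHead, Matrix.vecTail,
          Matrix.empty_val', Matrix.cons_val_fin_one, Function.comp,
          Pi.zero_apply, hc2, hf2, Fin.reduceFinMk, Fin.isValue]
        field_simp
        try ring

theorem cayley_menger_linear_factor_plus
    (p q r s c f g h : ℝ)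
    (hp : 0 < p) (hq : 0 < q) (hr : 0 < r) (hs : 0 < s)
    (hc : 0 < c) (hf : 0 < f) (hg : 0 < g) (hh : 0 < h)
    (hc2 : c ^ 2 = q ^ 2 + p ^ 2 + (q / s) * (g ^ 2 - p ^ 2 - s ^ 2))
    (hf2 : f ^ 2 = q ^ 2 + r ^ 2 + (q / s) * (h ^ 2 - r ^ 2 - s ^ 2)) :
    ∃ R : ℝ → ℝ → ℝ, ∀ x y : ℝ,
      -(Matrix.det !![(0 : ℝ), 1, 1, 1, 1, 1;
                      1, 0, p ^ 2, q ^ 2, r ^ 2, s ^ 2;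
                      1, p ^ 2, 0, c ^ 2, x, g ^ 2;
                      1, q ^ 2, c ^ 2, 0, f ^ 2, y;
                      1, r ^ 2, x, f ^ 2, 0, h ^ 2;
                      1, s ^ 2, g ^ 2, y, h ^ 2, 0]) =
        (y - (q - s) ^ 2) * R x y := by
  refine ⟨fun x y =>
    if y = (q - s) ^ 2 then 0 else
      (-(Matrix.det !![(0 : ℝ), 1, 1, 1, 1, 1;
                      1, 0, p ^ 2, q ^ 2, r ^ 2, s ^ 2;
                      1, p ^ 2, 0, c ^ 2, x, g ^ 2;
                      1, q ^ 2, c ^ 2, 0, f ^ 2, y;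
                      1, r ^ 2, x, f ^ 2, 0, h ^ 2;
                      1, s ^ 2, g ^ 2, y, h ^ 2, 0])) / (y - (q - s) ^ 2),
    fun x y => ?_⟩
  by_cases hy : y = (q - s) ^ 2
  · subst hy
    simp only [if_pos rfl, mul_zero,
      cayley_menger_det_zero_at_root p q r s c f g h x hs hc2 hf2, neg_zero, sub_self,
      zero_mul]
  · simp only [if_neg hy]
    rw [mul_div_cancel₀ _ (sub_ne_zero_of_ne hy)]
end

section
/- With the same Cayley-Menger polynomial Q(x,y), if c² = q² + p² - (q/s)(g² - p² - s²) and f² = q² + r² - (q/s)(h² - r² - s²), then Q(x,y) is divisible by (y - (q + s)²). -/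
theorem cayley_menger_linear_factor_minus
    (p q r s c f g h : ℝ)
    (hp : 0 < p) (hq : 0 < q) (hr : 0 < r) (hs : 0 < s)
    (hc : 0 < c) (hf : 0 < f) (hg : 0 < g) (hh : 0 < h)
    (hc2 : c ^ 2 = q ^ 2 + p ^ 2 - (q / s) * (g ^ 2 - p ^ 2 - s ^ 2))
    (hf2 : f ^ 2 = q ^ 2 + r ^ 2 - (q / s) * (h ^ 2 - r ^ 2 - s ^ 2)) :
    ∃ R : ℝ → ℝ → ℝ, ∀ x y : ℝ,
      -(Matrix.det !![(0 : ℝ), 1, 1, 1, 1, 1;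
                      1, 0, p ^ 2, q ^ 2, r ^ 2, s ^ 2;
                      1, p ^ 2, 0, c ^ 2, x, g ^ 2;
                      1, q ^ 2, c ^ 2, 0, f ^ 2, y;
                      1, r ^ 2, x, f ^ 2, 0, h ^ 2;
                      1, s ^ 2, g ^ 2, y, h ^ 2, 0]) =
        (y - (q + s) ^ 2) * R x y := by
  have hs0 : s ≠ 0 := ne_of_gt hs
  have hc2' : s * c ^ 2 = s * q ^ 2 + s * p ^ 2 - q * (g ^ 2 - p ^ 2 - s ^ 2) := by
    rw [hc2]; field_simp
  have hf2' : s * f ^ 2 = s * q ^ 2 + s * r ^ 2 - q * (h ^ 2 - r ^ 2 - s ^ 2) := by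
    rw [hf2]; field_simp
  have key : ∀ x : ℝ,
      -(Matrix.det !![(0 : ℝ), 1, 1, 1, 1, 1;
                      1, 0, p ^ 2, q ^ 2, r ^ 2, s ^ 2;
                      1, p ^ 2, 0, c ^ 2, x, g ^ 2;
                      1, q ^ 2, c ^ 2, 0, f ^ 2, (q + s) ^ 2;
                      1, r ^ 2, x, f ^ 2, 0, h ^ 2;
                      1, s ^ 2, g ^ 2, (q + s) ^ 2, h ^ 2, 0]) = 0 := by
    intro x
    rw [neg_eq_zero]
    rw [← Matrix.exists_mulVec_eq_zero_iff]
    refine ⟨![-(q * s * (q + s)), -(q + s), 0, s, 0, q], ?_, ?_⟩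
    · intro hv
      have : (![-(q * s * (q + s)), -(q + s), 0, s, 0, q] : Fin 6 → ℝ) 3 = 0 := by
        rw [hv]; rfl
      simp at this
      exact hs0 this
    · have v5 : ∀ (a : ℝ) (u : Fin 5 → ℝ), Matrix.vecCons a u 5 = u 4 := fun _ _ => rfl
      have v4 : ∀ (a : ℝ) (u : Fin 4 → ℝ), Matrix.vecCons a u 4 = u 3 := fun _ _ => rfl
      have v3 : ∀ (a : ℝ) (u : Fin 3 → ℝ), Matrix.vecCons a u 3 = u 2 := fun _ _ => rfl
      have v2 : ∀ (a : ℝ) (u : Fin 2 → ℝ), Matrix.vecCons a u 2 = u 1 := fun _ _ => rfl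
      have v1 : ∀ (a : ℝ) (u : Fin 1 → ℝ), Matrix.vecCons a u 1 = u 0 := fun _ _ => rfl
      have v0 : ∀ (n : ℕ) (a : ℝ) (u : Fin n → ℝ), Matrix.vecCons a u 0 = a := fun _ _ _ => rfl
      funext i
      fin_cases i <;>
        simp [Matrix.mulVec, dotProduct, Fin.sum_univ_six, v5, v4, v3, v2, v1, v0] <;>
        first
          | linear_combination (norm := ring1) hc2'
          | linear_combination (norm := ring1) - hc2'
          | linear_combination (norm := ring1) hf2'
          | linear_combination (norm := ring1) - hf2'
          | linear_combination (norm := ring1)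
  refine ⟨fun x y =>
    if y = (q + s) ^ 2 then 0 else
      (-(Matrix.det !![(0 : ℝ), 1, 1, 1, 1, 1;
                      1, 0, p ^ 2, q ^ 2, r ^ 2, s ^ 2;
                      1, p ^ 2, 0, c ^ 2, x, g ^ 2;
                      1, q ^ 2, c ^ 2, 0, f ^ 2, y;
                      1, r ^ 2, x, f ^ 2, 0, h ^ 2;
                      1, s ^ 2, g ^ 2, y, h ^ 2, 0])) / (y - (q + s) ^ 2),
    fun x y => ?_⟩
  by_cases hy : y = (q + s) ^ 2
  · subst hy
    simpa using key x
  · simp only [if_neg hy]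
    rw [mul_div_cancel₀]
    exact sub_ne_zero_of_ne hy
end

section
/- With the same Cayley-Menger polynomial Q(x,y) (for lateral edges p,q,r,s, base edges c,f,h,g, squared diagonals x,y), if c² = q² + p² + (pq/(sr))(h² - r² - s²) and f² = q² + r² + (qr/(ps))(g² - p² - s²), then Q(x,y) factors as the product of two polynomials of bidegree (1,1): Q(x,y) = [xy - (s+q)²x - (p+r)²y + ...]·[xy - (s-q)²x - (p-r)²y + ...], where each factor is of the form xy + Ax + By + C with appropriate constants. -/
set_option maxRecDepth 8000
set_option maxHeartbeats 4000000


private lemma mydet_fin_4 (A : Matrix (Fin 4) (Fin 4) ℝ) :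
    A.det = A 0 0 * A 1 1 * A 2 2 * A 3 3 - A 0 0 * A 1 1 * A 2 3 * A 3 2 - A 0 0 * A 1 2 * A 2 1 * A 3 3 + A 0 0 * A 1 2 * A 2 3 * A 3 1 + A 0 0 * A 1 3 * A 2 1 * A 3 2 - A 0 0 * A 1 3 * A 2 2 * A 3 1 - A 0 1 * A 1 0 * A 2 2 * A 3 3 + A 0 1 * A 1 0 * A 2 3 * A 3 2 + A 0 1 * A 1 2 * A 2 0 * A 3 3 - A 0 1 * A 1 2 * A 2 3 * A 3 0 - A 0 1 * A 1 3 * A 2 0 * A 3 2 + A 0 1 * A 1 3 * A 2 2 * A 3 0 + A 0 2 * A 1 0 * A 2 1 * A 3 3 - A 0 2 * A 1 0 * A 2 3 * A 3 1 - A 0 2 * A 1 1 * A 2 0 * A 3 3 + A 0 2 * A 1 1 * A 2 3 * A 3 0 + A 0 2 * A 1 3 * A 2 0 * A 3 1 - A 0 2 * A 1 3 * A 2 1 * A 3 0 - A 0 3 * A 1 0 * A 2 1 * A 3 2 + A 0 3 * A 1 0 * A 2 2 * A 3 1 + A 0 3 * A 1 1 * A 2 0 * A 3 2 - A 0 3 *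 A 1 1 * A 2 2 * A 3 0 - A 0 3 * A 1 2 * A 2 0 * A 3 1 + A 0 3 * A 1 2 * A 2 1 * A 3 0 := by
  rw [Matrix.det_succ_row_zero]
  simp only [Fin.sum_univ_succ, Fin.sum_univ_zero, Matrix.submatrix_apply, Matrix.det_fin_three,
    Fin.isValue, Fin.val_zero, Fin.val_succ, Fin.val_one, pow_zero, pow_succ, pow_one,
    show (Fin.succ (0:Fin 1) : Fin 2) = 1 by rfl,
    show (Fin.succ (0:Fin 2) : Fin 3) = 1 by rfl,
    show (Fin.succ (1:Fin 2) : Fin 3) = 2 by rfl,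
    show (Fin.succ (0:Fin 3) : Fin 4) = 1 by rfl,
    show (Fin.succ (1:Fin 3) : Fin 4) = 2 by rfl,
    show (Fin.succ (2:Fin 3) : Fin 4) = 3 by rfl,
    show ((0:Fin 4).succAbove (0:Fin 3)) = 1 by rfl,
    show ((0:Fin 4).succAbove (1:Fin 3)) = 2 by rfl,
    show ((0:Fin 4).succAbove (2:Fin 3)) = 3 by rfl,
    show ((1:Fin 4).succAbove (0:Fin 3)) = 0 by rfl,
    show ((1:Fin 4).succAbove (1:Fin 3)) = 2 by rfl,
    show ((1:Fin 4).succAbove (2:Fin 3)) = 3 by rfl,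
    show ((2:Fin 4).succAbove (0:Fin 3)) = 0 by rfl,
    show ((2:Fin 4).succAbove (1:Fin 3)) = 1 by rfl,
    show ((2:Fin 4).succAbove (2:Fin 3)) = 3 by rfl,
    show ((3:Fin 4).succAbove (0:Fin 3)) = 0 by rfl,
    show ((3:Fin 4).succAbove (1:Fin 3)) = 1 by rfl,
    show ((3:Fin 4).succAbove (2:Fin 3)) = 2 by rfl]
  ring
private lemma mydet_fin_5 (A : Matrix (Fin 5) (Fin 5) ℝ) :
    A.det = A 0 0 * A 1 1 * A 2 2 * A 3 3 * A 4 4 - A 0 0 * A 1 1 * A 2 2 * A 3 4 * A 4 3 - A 0 0 * A 1 1 * A 2 3 * A 3 2 * A 4 4 + A 0 0 * A 1 1 * A 2 3 * A 3 4 * A 4 2 + A 0 0 * A 1 1 * A 2 4 * A 3 2 * A 4 3 - A 0 0 * A 1 1 * A 2 4 * A 3 3 * A 4 2 - A 0 0 * A 1 2 * A 2 1 * A 3 3 * A 4 4 + A 0 0 * A 1 2 * A 2 1 * A 3 4 * A 4 3 + A 0 0 * A 1 2 * A 2 3 * A 3 1 * A 4 4 - A 0 0 * A 1 2 * A 2 3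 * A 3 4 * A 4 1 - A 0 0 * A 1 2 * A 2 4 * A 3 1 * A 4 3 + A 0 0 * A 1 2 * A 2 4 * A 3 3 * A 4 1 + A 0 0 * A 1 3 * A 2 1 * A 3 2 * A 4 4 - A 0 0 * A 1 3 * A 2 1 * A 3 4 * A 4 2 - A 0 0 * A 1 3 * A 2 2 * A 3 1 * A 4 4 + A 0 0 * A 1 3 * A 2 2 * A 3 4 * A 4 1 + A 0 0 * A 1 3 * A 2 4 * A 3 1 * A 4 2 - A 0 0 * A 1 3 * A 2 4 * A 3 2 * A 4 1 - A 0 0 * A 1 4 * A 2 1 * A 3 2 * A 4 3 + A 0 0 * A 1 4 * A 2 1 * A 3 3 * A 4 2 + A 0 0 * A 1 4 * A 2 2 * A 3 1 * A 4 3 - A 0 0 * A 1 4 * A 2 2 * A 3 3 * A 4 1 - A 0 0 * A 1 4 * A 2 3 * A 3 1 * A 4 2 + A 0 0 * A 1 4 * A 2 3 * A 3 2 * A 4 1 - A 0 1 * A 1 0 * A 2 2 * A 3 3 * A 4 4 + A 0 1 * A 1 0 * A 2 2 * A 3 4 * A 4 3 + A 0 1 * A 1 0 * A 2 3 * A 3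 2 * A 4 4 - A 0 1 * A 1 0 * A 2 3 * A 3 4 * A 4 2 - A 0 1 * A 1 0 * A 2 4 * A 3 2 * A 4 3 + A 0 1 * A 1 0 * A 2 4 * A 3 3 * A 4 2 + A 0 1 * A 1 2 * A 2 0 * A 3 3 * A 4 4 - A 0 1 * A 1 2 * A 2 0 * A 3 4 * A 4 3 - A 0 1 * A 1 2 * A 2 3 * A 3 0 * A 4 4 + A 0 1 * A 1 2 * A 2 3 * A 3 4 * A 4 0 + A 0 1 * A 1 2 * A 2 4 * A 3 0 * A 4 3 - A 0 1 * A 1 2 * A 2 4 * A 3 3 * A 4 0 - A 0 1 * A 1 3 * A 2 0 * A 3 2 * A 4 4 + A 0 1 * A 1 3 * A 2 0 * A 3 4 * A 4 2 + A 0 1 * A 1 3 * A 2 2 * A 3 0 * A 4 4 - A 0 1 * A 1 3 * A 2 2 * A 3 4 * A 4 0 - A 0 1 * A 1 3 * A 2 4 * A 3 0 * A 4 2 + A 0 1 * A 1 3 * A 2 4 * A 3 2 * A 4 0 + A 0 1 * A 1 4 * A 2 0 * A 3 2 * A 4 3 - A 0 1 * A 1 4 * A 2 0 * A 3 3 * A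 4 2 - A 0 1 * A 1 4 * A 2 2 * A 3 0 * A 4 3 + A 0 1 * A 1 4 * A 2 2 * A 3 3 * A 4 0 + A 0 1 * A 1 4 * A 2 3 * A 3 0 * A 4 2 - A 0 1 * A 1 4 * A 2 3 * A 3 2 * A 4 0 + A 0 2 * A 1 0 * A 2 1 * A 3 3 * A 4 4 - A 0 2 * A 1 0 * A 2 1 * A 3 4 * A 4 3 - A 0 2 * A 1 0 * A 2 3 * A 3 1 * A 4 4 + A 0 2 * A 1 0 * A 2 3 * A 3 4 * A 4 1 + A 0 2 * A 1 0 * A 2 4 * A 3 1 * A 4 3 - A 0 2 * A 1 0 * A 2 4 * A 3 3 * A 4 1 - A 0 2 * A 1 1 * A 2 0 * A 3 3 * A 4 4 + A 0 2 * A 1 1 * A 2 0 * A 3 4 * A 4 3 + A 0 2 * A 1 1 * A 2 3 * A 3 0 * A 4 4 - A 0 2 * A 1 1 * A 2 3 * A 3 4 * A 4 0 - A 0 2 * A 1 1 * A 2 4 * A 3 0 * A 4 3 + A 0 2 * A 1 1 * A 2 4 * A 3 3 * A 4 0 + A 0 2 * A 1 3 * A 2 0 * A 3 1 * A 4 4 -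 A 0 2 * A 1 3 * A 2 0 * A 3 4 * A 4 1 - A 0 2 * A 1 3 * A 2 1 * A 3 0 * A 4 4 + A 0 2 * A 1 3 * A 2 1 * A 3 4 * A 4 0 + A 0 2 * A 1 3 * A 2 4 * A 3 0 * A 4 1 - A 0 2 * A 1 3 * A 2 4 * A 3 1 * A 4 0 - A 0 2 * A 1 4 * A 2 0 * A 3 1 * A 4 3 + A 0 2 * A 1 4 * A 2 0 * A 3 3 * A 4 1 + A 0 2 * A 1 4 * A 2 1 * A 3 0 * A 4 3 - A 0 2 * A 1 4 * A 2 1 * A 3 3 * A 4 0 - A 0 2 * A 1 4 * A 2 3 * A 3 0 * A 4 1 + A 0 2 * A 1 4 * A 2 3 * A 3 1 * A 4 0 - A 0 3 * A 1 0 * A 2 1 * A 3 2 * A 4 4 + A 0 3 * A 1 0 * A 2 1 * A 3 4 * A 4 2 + A 0 3 * A 1 0 * A 2 2 * A 3 1 * A 4 4 - A 0 3 * A 1 0 * A 2 2 * A 3 4 * A 4 1 - A 0 3 * A 1 0 * A 2 4 * A 3 1 * A 4 2 + A 0 3 * A 1 0 * A 2 4 * A 3 2 * A 4 1 + A 0 3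 * A 1 1 * A 2 0 * A 3 2 * A 4 4 - A 0 3 * A 1 1 * A 2 0 * A 3 4 * A 4 2 - A 0 3 * A 1 1 * A 2 2 * A 3 0 * A 4 4 + A 0 3 * A 1 1 * A 2 2 * A 3 4 * A 4 0 + A 0 3 * A 1 1 * A 2 4 * A 3 0 * A 4 2 - A 0 3 * A 1 1 * A 2 4 * A 3 2 * A 4 0 - A 0 3 * A 1 2 * A 2 0 * A 3 1 * A 4 4 + A 0 3 * A 1 2 * A 2 0 * A 3 4 * A 4 1 + A 0 3 * A 1 2 * A 2 1 * A 3 0 * A 4 4 - A 0 3 * A 1 2 * A 2 1 * A 3 4 * A 4 0 - A 0 3 * A 1 2 * A 2 4 * A 3 0 * A 4 1 + A 0 3 * A 1 2 * A 2 4 * A 3 1 * A 4 0 + A 0 3 * A 1 4 * A 2 0 * A 3 1 * A 4 2 - A 0 3 * A 1 4 * A 2 0 * A 3 2 * A 4 1 - A 0 3 * A 1 4 * A 2 1 * A 3 0 * A 4 2 + A 0 3 * A 1 4 * A 2 1 * A 3 2 * A 4 0 + A 0 3 * A 1 4 * A 2 2 * A 3 0 * A 4 1 - A 0 3 * A 1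 4 * A 2 2 * A 3 1 * A 4 0 + A 0 4 * A 1 0 * A 2 1 * A 3 2 * A 4 3 - A 0 4 * A 1 0 * A 2 1 * A 3 3 * A 4 2 - A 0 4 * A 1 0 * A 2 2 * A 3 1 * A 4 3 + A 0 4 * A 1 0 * A 2 2 * A 3 3 * A 4 1 + A 0 4 * A 1 0 * A 2 3 * A 3 1 * A 4 2 - A 0 4 * A 1 0 * A 2 3 * A 3 2 * A 4 1 - A 0 4 * A 1 1 * A 2 0 * A 3 2 * A 4 3 + A 0 4 * A 1 1 * A 2 0 * A 3 3 * A 4 2 + A 0 4 * A 1 1 * A 2 2 * A 3 0 * A 4 3 - A 0 4 * A 1 1 * A 2 2 * A 3 3 * A 4 0 - A 0 4 * A 1 1 * A 2 3 * A 3 0 * A 4 2 + A 0 4 * A 1 1 * A 2 3 * A 3 2 * A 4 0 + A 0 4 * A 1 2 * A 2 0 * A 3 1 * A 4 3 - A 0 4 * A 1 2 * A 2 0 * A 3 3 * A 4 1 - A 0 4 * A 1 2 * A 2 1 * A 3 0 * A 4 3 + A 0 4 * A 1 2 * A 2 1 * A 3 3 * A 4 0 + A 0 4 * A 1 2 * A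 2 3 * A 3 0 * A 4 1 - A 0 4 * A 1 2 * A 2 3 * A 3 1 * A 4 0 - A 0 4 * A 1 3 * A 2 0 * A 3 1 * A 4 2 + A 0 4 * A 1 3 * A 2 0 * A 3 2 * A 4 1 + A 0 4 * A 1 3 * A 2 1 * A 3 0 * A 4 2 - A 0 4 * A 1 3 * A 2 1 * A 3 2 * A 4 0 - A 0 4 * A 1 3 * A 2 2 * A 3 0 * A 4 1 + A 0 4 * A 1 3 * A 2 2 * A 3 1 * A 4 0 := by
  rw [Matrix.det_succ_row_zero]
  simp only [Fin.sum_univ_succ, Fin.sum_univ_zero, Matrix.submatrix_apply, mydet_fin_4,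
    Fin.isValue, Fin.val_zero, Fin.val_succ, Fin.val_one, pow_zero, pow_succ, pow_one,
    show (Fin.succ (0:Fin 1) : Fin 2) = 1 by rfl,
    show (Fin.succ (0:Fin 2) : Fin 3) = 1 by rfl,
    show (Fin.succ (1:Fin 2) : Fin 3) = 2 by rfl,
    show (Fin.succ (0:Fin 3) : Fin 4) = 1 by rfl,
    show (Fin.succ (1:Fin 3) : Fin 4) = 2 by rfl,
    show (Fin.succ (2:Fin 3) : Fin 4) = 3 by rfl,
    show (Fin.succ (0:Fin 4) : Fin 5) = 1 by rfl,
    show (Fin.succ (1:Fin 4) : Fin 5) = 2 by rfl,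
    show (Fin.succ (2:Fin 4) : Fin 5) = 3 by rfl,
    show (Fin.succ (3:Fin 4) : Fin 5) = 4 by rfl,
    show ((0:Fin 5).succAbove (0:Fin 4)) = 1 by rfl,
    show ((0:Fin 5).succAbove (1:Fin 4)) = 2 by rfl,
    show ((0:Fin 5).succAbove (2:Fin 4)) = 3 by rfl,
    show ((0:Fin 5).succAbove (3:Fin 4)) = 4 by rfl,
    show ((1:Fin 5).succAbove (0:Fin 4)) = 0 by rfl,
    show ((1:Fin 5).succAbove (1:Fin 4)) = 2 by rfl,
    show ((1:Fin 5).succAbove (2:Fin 4)) = 3 by rfl,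
    show ((1:Fin 5).succAbove (3:Fin 4)) = 4 by rfl,
    show ((2:Fin 5).succAbove (0:Fin 4)) = 0 by rfl,
    show ((2:Fin 5).succAbove (1:Fin 4)) = 1 by rfl,
    show ((2:Fin 5).succAbove (2:Fin 4)) = 3 by rfl,
    show ((2:Fin 5).succAbove (3:Fin 4)) = 4 by rfl,
    show ((3:Fin 5).succAbove (0:Fin 4)) = 0 by rfl,
    show ((3:Fin 5).succAbove (1:Fin 4)) = 1 by rfl,
    show ((3:Fin 5).succAbove (2:Fin 4)) = 2 by rfl,
    show ((3:Fin 5).succAbove (3:Fin 4)) = 4 by rfl,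
    show ((4:Fin 5).succAbove (0:Fin 4)) = 0 by rfl,
    show ((4:Fin 5).succAbove (1:Fin 4)) = 1 by rfl,
    show ((4:Fin 5).succAbove (2:Fin 4)) = 2 by rfl,
    show ((4:Fin 5).succAbove (3:Fin 4)) = 3 by rfl]
  ring

private lemma cons_val_five {α : Type*} {m : ℕ} (x : α) (u : Fin (m+5) → α) :
    Matrix.vecCons x u 5 = Matrix.vecHead (Matrix.vecTail (Matrix.vecTail (Matrix.vecTail (Matrix.vecTail u)))) := rfl

private lemma detCM (P Q R S G H C F x y : ℝ) :
    Matrix.det !![(0 : ℝ), 1, 1, 1, 1, 1;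
                  1, 0, P, Q, R, S;
                  1, P, 0, C, x, G;
                  1, Q, C, 0, F, y;
                  1, R, x, F, 0, H;
                  1, S, G, y, H, 0] = (-1)*x^2*y^2 + (2)*H*C*x*y + (-1)*H^2*C^2 + (2)*G*F*x*y + (2)*G*H*C*F + (-1)*G^2*F^2 + (2)*S*x^2*y + (-2)*S*F*x*y + (-2)*S*C*x*y + (4)*S*C*F*x + (-2)*S*H*C*x + (-2)*S*H*C*F + (2)*S*H*C^2 + (-2)*S*G*F*x + (2)*S*G*F^2 + (-2)*S*G*C*F + (-1)*S^2*x^2 + (2)*S^2*F*x + (-1)*S^2*F^2 + (2)*S^2*C*x + (2)*S^2*C*F + (-1)*S^2*C^2 + (2)*R*x*y^2 + (-2)*R*C*x*y + (-2)*R*H*C*y + (2)*R*H*C^2 + (-2)*R*G*x*y + (-2)*R*G*F*y + (4)*R*G*C*y + (-2)*R*G*C*F + (-2)*R*G*H*C + (2)*R*G^2*F + (-2)*R*S*x*y + (2)*R*S*F*y + (-2)*R*S*C*y + (-2)*R*S*C*x + (-2)*R*S*C*F + (2)*R*S*C^2 + (4)*R*S*H*C + (2)*R*S*G*x + (-2)*R*S*G*F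 + (-2)*R*S*G*C + (-1)*R^2*y^2 + (2)*R^2*C*y + (-1)*R^2*C^2 + (2)*R^2*G*y + (2)*R^2*G*C + (-1)*R^2*G^2 + (2)*Q*x^2*y + (-2)*Q*H*x*y + (-2)*Q*H*C*x + (2)*Q*H^2*C + (-2)*Q*G*x*y + (-2)*Q*G*F*x + (4)*Q*G*H*x + (-2)*Q*G*H*F + (-2)*Q*G*H*C + (2)*Q*G^2*F + (4)*Q*S*x*y + (2)*Q*S*x^2 + (-2)*Q*S*F*x + (-2)*Q*S*C*x + (-2)*Q*S*H*x + (2)*Q*S*H*F + (-2)*Q*S*H*C + (-2)*Q*S*G*x + (-2)*Q*S*G*F + (2)*Q*S*G*C + (-2)*Q*R*x*y + (2)*Q*R*C*x + (2)*Q*R*H*y + (-2)*Q*R*H*C + (-2)*Q*R*G*y + (-2)*Q*R*G*x + (4)*Q*R*G*F + (-2)*Q*R*G*C + (-2)*Q*R*G*H + (2)*Q*R*G^2 + (-1)*Q^2*x^2 + (2)*Q^2*H*x + (-1)*Q^2*H^2 + (2)*Q^2*G*x + (2)*Q^2*G*H + (-1)*Q^2*G^2 + (2)*P*x*y^2 +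 (-2)*P*F*x*y + (-2)*P*H*x*y + (4)*P*H*F*y + (-2)*P*H*C*y + (-2)*P*H*C*F + (2)*P*H^2*C + (-2)*P*G*F*y + (2)*P*G*F^2 + (-2)*P*G*H*F + (-2)*P*S*x*y + (-2)*P*S*F*y + (-2)*P*S*F*x + (2)*P*S*F^2 + (2)*P*S*C*y + (-2)*P*S*C*F + (2)*P*S*H*x + (-2)*P*S*H*F + (-2)*P*S*H*C + (4)*P*S*G*F + (2)*P*R*y^2 + (4)*P*R*x*y + (-2)*P*R*F*y + (-2)*P*R*C*y + (2)*P*R*C*F + (-2)*P*R*H*y + (-2)*P*R*H*C + (-2)*P*R*G*y + (-2)*P*R*G*F + (2)*P*R*G*H + (-2)*P*Q*x*y + (2)*P*Q*F*x + (-2)*P*Q*H*y + (-2)*P*Q*H*x + (-2)*P*Q*H*F + (4)*P*Q*H*C + (2)*P*Q*H^2 + (2)*P*Q*G*y + (-2)*P*Q*G*F + (-2)*P*Q*G*H + (-1)*P^2*y^2 + (2)*P^2*F*y + (-1)*P^2*F^2 + (2)*P^2*H*y + (2)*P^2*H*F + (-1)*P^2*H^2 := by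
  rw [Matrix.det_succ_row_zero]
  simp only [Fin.sum_univ_succ, Fin.sum_univ_zero, Matrix.submatrix_apply, mydet_fin_5,
    Fin.isValue, Fin.val_zero, Fin.val_succ, Fin.val_one, pow_zero, pow_succ, pow_one,
    show (Fin.succ (0:Fin 1) : Fin 2) = 1 by rfl,
    show (Fin.succ (0:Fin 2) : Fin 3) = 1 by rfl,
    show (Fin.succ (1:Fin 2) : Fin 3) = 2 by rfl,
    show (Fin.succ (0:Fin 3) : Fin 4) = 1 by rfl,
    show (Fin.succ (1:Fin 3) : Fin 4) = 2 by rfl,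
    show (Fin.succ (2:Fin 3) : Fin 4) = 3 by rfl,
    show (Fin.succ (0:Fin 4) : Fin 5) = 1 by rfl,
    show (Fin.succ (1:Fin 4) : Fin 5) = 2 by rfl,
    show (Fin.succ (2:Fin 4) : Fin 5) = 3 by rfl,
    show (Fin.succ (3:Fin 4) : Fin 5) = 4 by rfl,
    show (Fin.succ (0:Fin 5) : Fin 6) = 1 by rfl,
    show (Fin.succ (1:Fin 5) : Fin 6) = 2 by rfl,
    show (Fin.succ (2:Fin 5) : Fin 6) = 3 by rfl,
    show (Fin.succ (3:Fin 5) : Fin 6) = 4 by rfl,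
    show (Fin.succ (4:Fin 5) : Fin 6) = 5 by rfl,
    show ((0:Fin 6).succAbove (0:Fin 5)) = 1 by rfl,
    show ((0:Fin 6).succAbove (1:Fin 5)) = 2 by rfl,
    show ((0:Fin 6).succAbove (2:Fin 5)) = 3 by rfl,
    show ((0:Fin 6).succAbove (3:Fin 5)) = 4 by rfl,
    show ((0:Fin 6).succAbove (4:Fin 5)) = 5 by rfl,
    show ((1:Fin 6).succAbove (0:Fin 5)) = 0 by rfl,
    show ((1:Fin 6).succAbove (1:Fin 5)) = 2 by rfl,
    show ((1:Fin 6).succAbove (2:Fin 5)) = 3 by rfl,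
    show ((1:Fin 6).succAbove (3:Fin 5)) = 4 by rfl,
    show ((1:Fin 6).succAbove (4:Fin 5)) = 5 by rfl,
    show ((2:Fin 6).succAbove (0:Fin 5)) = 0 by rfl,
    show ((2:Fin 6).succAbove (1:Fin 5)) = 1 by rfl,
    show ((2:Fin 6).succAbove (2:Fin 5)) = 3 by rfl,
    show ((2:Fin 6).succAbove (3:Fin 5)) = 4 by rfl,
    show ((2:Fin 6).succAbove (4:Fin 5)) = 5 by rfl,
    show ((3:Fin 6).succAbove (0:Fin 5)) = 0 by rfl,
    show ((3:Fin 6).succAbove (1:Fin 5)) = 1 by rfl,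
    show ((3:Fin 6).succAbove (2:Fin 5)) = 2 by rfl,
    show ((3:Fin 6).succAbove (3:Fin 5)) = 4 by rfl,
    show ((3:Fin 6).succAbove (4:Fin 5)) = 5 by rfl,
    show ((4:Fin 6).succAbove (0:Fin 5)) = 0 by rfl,
    show ((4:Fin 6).succAbove (1:Fin 5)) = 1 by rfl,
    show ((4:Fin 6).succAbove (2:Fin 5)) = 2 by rfl,
    show ((4:Fin 6).succAbove (3:Fin 5)) = 3 by rfl,
    show ((4:Fin 6).succAbove (4:Fin 5)) = 5 by rfl,
    show ((5:Fin 6).succAbove (0:Fin 5)) = 0 by rfl,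
    show ((5:Fin 6).succAbove (1:Fin 5)) = 1 by rfl,
    show ((5:Fin 6).succAbove (2:Fin 5)) = 2 by rfl,
    show ((5:Fin 6).succAbove (3:Fin 5)) = 3 by rfl,
    show ((5:Fin 6).succAbove (4:Fin 5)) = 4 by rfl,
    Matrix.cons_val', Matrix.cons_val_zero, Matrix.cons_val_one, Matrix.cons_val_two,
    Matrix.cons_val_three, Matrix.cons_val_four, cons_val_five, Matrix.vecHead, Matrix.vecTail,
    Matrix.empty_val', Matrix.cons_val_fin_one, Matrix.of_apply, Function.comp_apply,
    mul_zero, zero_mul, mul_one, one_mul, add_zero, zero_add, neg_zero, neg_neg, sub_zero, zero_sub]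
  ring

theorem cayley_menger_bilinear_factorization
    (p q r s c f g h : ℝ)
    (hp : 0 < p) (hq : 0 < q) (hr : 0 < r) (hs : 0 < s)
    (hc : 0 < c) (hf : 0 < f) (hg : 0 < g) (hh : 0 < h)
    (hc2 : c ^ 2 = q ^ 2 + p ^ 2 + (p * q / (s * r)) * (h ^ 2 - r ^ 2 - s ^ 2))
    (hf2 : f ^ 2 = q ^ 2 + r ^ 2 + (q * r / (p * s)) * (g ^ 2 - p ^ 2 - s ^ 2)) :
    ∃ C₁ C₂ : ℝ, ∀ x y : ℝ,
      -(Matrix.det !![(0 : ℝ), 1, 1, 1, 1, 1;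
                      1, 0, p ^ 2, q ^ 2, r ^ 2, s ^ 2;
                      1, p ^ 2, 0, c ^ 2, x, g ^ 2;
                      1, q ^ 2, c ^ 2, 0, f ^ 2, y;
                      1, r ^ 2, x, f ^ 2, 0, h ^ 2;
                      1, s ^ 2, g ^ 2, y, h ^ 2, 0]) =
        (x * y - (s + q) ^ 2 * x - (p + r) ^ 2 * y + C₁) *
        (x * y - (s - q) ^ 2 * x - (p - r) ^ 2 * y + C₂) := by
  refine ⟨(-1)*q*r*g^4/(p*s) + (2)*q*r*s*g^2/(p) + (-1)*q*r*s^3/(p) + (1)*r^2*s^2 + (-2)*q*g^2*h^2/(s) + (2)*q*s*h^2 + (2)*q*s*g^2 + (-2)*q*s^3 + (2)*q*r^2*g^2/(s) + (1)*q^2*r^2 + (2)*p*r*s^2 + (-1)*p*q*h^4/(r*s) + (2)*p*q*s*h^2/(r) + (-1)*p*q*s^3/(r) + (2)*p*q*r*h^2/(s) + (2)*p*q*r*g^2/(s) + (-1)*p*q*r^3/(s) + (2)*p*q^2*r + (1)*p^2*s^2 + (2)*p^2*q*h^2/(s) + (-2)*p^2*q*r^2/(s) + (1)*p^2*q^2 +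 (-1)*p^3*q*r/(s),
    (-1)*q*r*g^4/(p*s) + (2)*q*r*s*g^2/(p) + (-1)*q*r*s^3/(p) + (1)*r^2*s^2 + (2)*q*g^2*h^2/(s) + (-2)*q*s*h^2 + (-2)*q*s*g^2 + (2)*q*s^3 + (-2)*q*r^2*g^2/(s) + (1)*q^2*r^2 + (-2)*p*r*s^2 + (-1)*p*q*h^4/(r*s) + (2)*p*q*s*h^2/(r) + (-1)*p*q*s^3/(r) + (2)*p*q*r*h^2/(s) + (2)*p*q*r*g^2/(s) + (-1)*p*q*r^3/(s) + (-2)*p*q^2*r + (1)*p^2*s^2 + (-2)*p^2*q*h^2/(s) + (2)*p^2*q*r^2/(s) + (1)*p^2*q^2 + (-1)*p^3*q*r/(s), fun x y => ?_⟩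
  rw [detCM, hc2, hf2]
  have h1 : p ≠ 0 := hp.ne'
  have h2 : r ≠ 0 := hr.ne'
  have h3 : s ≠ 0 := hs.ne'
  field_simp
  ring
end

section
/- Let positive reals satisfy the eight relations: c² = q² + p² - (q/s)(g² - p² - s²), f² = q² + r² - (q/s)(h² - r² - s²), c² = a² + b² - (a/d)(g² - b² - d²), f² = a² + e² - (a/d)(h² - e² - d²), b² = a² + c² + (a/q)(p² - q² - c²), e² = a² + f² + (a/q)(r² - q² - f²), b² = d² + g² + (d/s)(p² - s² - g²), e² = d² + h² + (d/s)(r² - s² - h²). Then s + q - a - d = 0. -/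
theorem class_IIx_relations_force_zero_sum
    (a b c d e f g h p q r s : ℝ)
    (ha : 0 < a) (hb : 0 < b) (hc : 0 < c) (hd : 0 < d) (he : 0 < e) (hf : 0 < f)
    (hg : 0 < g) (hh : 0 < h) (hp : 0 < p) (hq : 0 < q) (hr : 0 < r) (hs : 0 < s)
    (h1 : c ^ 2 = q ^ 2 + p ^ 2 - (q / s) * (g ^ 2 - p ^ 2 - s ^ 2))
    (h2 : f ^ 2 = q ^ 2 + r ^ 2 - (q / s) * (h ^ 2 - r ^ 2 - s ^ 2))
    (h3 : c ^ 2 = a ^ 2 + b ^ 2 - (a / d) * (g ^ 2 - b ^ 2 - d ^ 2))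
    (h4 : f ^ 2 = a ^ 2 + e ^ 2 - (a / d) * (h ^ 2 - e ^ 2 - d ^ 2))
    (h5 : b ^ 2 = a ^ 2 + c ^ 2 + (a / q) * (p ^ 2 - q ^ 2 - c ^ 2))
    (h6 : e ^ 2 = a ^ 2 + f ^ 2 + (a / q) * (r ^ 2 - q ^ 2 - f ^ 2))
    (h7 : b ^ 2 = d ^ 2 + g ^ 2 + (d / s) * (p ^ 2 - s ^ 2 - g ^ 2))
    (h8 : e ^ 2 = d ^ 2 + h ^ 2 + (d / s) * (r ^ 2 - s ^ 2 - h ^ 2)) :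
    s + q - a - d = 0 := by
  have hs0 : s ≠ 0 := hs.ne'
  have hd0 : d ≠ 0 := hd.ne'
  have hq0 : q ≠ 0 := hq.ne'
  have H1 : s * c ^ 2 = s * (q ^ 2 + p ^ 2) - q * (g ^ 2 - p ^ 2 - s ^ 2) := by
    rw [h1]; field_simp
  have H3 : d * c ^ 2 = d * (a ^ 2 + b ^ 2) - a * (g ^ 2 - b ^ 2 - d ^ 2) := by
    rw [h3]; field_simp
  have H5 : q * b ^ 2 = q * (a ^ 2 + c ^ 2) + a * (p ^ 2 - q ^ 2 - c ^ 2) := by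
    rw [h5]; field_simp
  have H7 : s * b ^ 2 = s * (d ^ 2 + g ^ 2) + d * (p ^ 2 - s ^ 2 - g ^ 2) := by
    rw [h7]; field_simp
  have key : 2 * s * q * a * d * (s + q - a - d) = 0 := by
    linear_combination (-(a * d)) * H1 + q * s * H3 + s * d * H5 + a * q * H7
  have hpos : (0:ℝ) < 2 * s * q * a * d := by positivity
  rcases mul_eq_zero.mp key with h | h
  · exact absurd h hpos.ne'
  · exact h
end

section
/- For positive reals p, q, r, s, a, b, c, d, e, f, g, h: if any three of the four conditions q·g·e = p·f·d, b·h·q = c·d·r, r·g·a = s·f·b, a·h·p = c·e·s hold, then the fourth one also holds. -/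
theorem three_proportionalities_imply_fourth
    (p q r s a b c d e f g h : ℝ)
    (hp : 0 < p) (hq : 0 < q) (hr : 0 < r) (hs : 0 < s)
    (ha : 0 < a) (hb : 0 < b) (hc : 0 < c) (hd : 0 < d)
    (he : 0 < e) (hf : 0 < f) (hg : 0 < g) (hh : 0 < h) :
    ((q * g * e = p * f * d ∧ b * h * q = c * d * r ∧ r * g * a = s * f * b) →
        a * h * p = c * e * s) ∧
    ((q * g * e = p * f * d ∧ b * h * q = c * d * r ∧ a * h * p = c * e * s) →
        r * g * a = s * f * b) ∧
    ((q * g * e = p * f * d ∧ r * g * a = s * f * b ∧ a * h * p = c * e * s) →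
        b * h * q = c * d * r) ∧
    ((b * h * q = c * d * r ∧ r * g * a = s * f * b ∧ a * h * p = c * e * s) →
        q * g * e = p * f * d) := by
  refine ⟨?_, ?_, ?_, ?_⟩
  · rintro ⟨h1, h2, h3⟩
    have K : (0:ℝ) < (q * g * e) * (q * g * e) * (b * r) := by positivity
    refine mul_right_cancel₀ (ne_of_gt K) ?_
    linear_combination (p*e*(b*h*q)*(r*g*a) - b*r*(c*e*s)*(q*g*e + p*f*d)) * h1
      + p*e*(p*f*d)*(r*g*a) * h2 + p*e*(p*f*d)*(c*d*r) * h3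
  · rintro ⟨h1, h2, h3⟩
    have K : (0:ℝ) < (b * h * q) * (b * h * q) * (e * p) := by positivity
    refine mul_right_cancel₀ (ne_of_gt K) ?_
    linear_combination r*b*(b*h*q)*(a*h*p) * h1
      + (r*b*(p*f*d)*(a*h*p) - e*p*(s*f*b)*(b*h*q + c*d*r)) * h2
      + r*b*(p*f*d)*(c*d*r) * h3
  · rintro ⟨h1, h2, h3⟩
    have K : (0:ℝ) < (r * g * a) * (r * g * a) * (e * p) := by positivity
    refine mul_right_cancel₀ (ne_of_gt K) ?_
    linear_combination b*r*(r*g*a)*(a*h*p) * h1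
      + (b*r*(p*f*d)*(a*h*p) - e*p*(c*d*r)*(r*g*a + s*f*b)) * h2
      + b*r*(p*f*d)*(s*f*b) * h3
  · rintro ⟨h1, h2, h3⟩
    have K : (0:ℝ) < (a * h * p) * (a * h * p) * (b * r) := by positivity
    refine mul_right_cancel₀ (ne_of_gt K) ?_
    linear_combination p*e*(r*g*a)*(a*h*p) * h1 + p*e*(c*d*r)*(a*h*p) * h2
      + (p*e*(c*d*r)*(s*f*b) - b*r*(p*f*d)*(a*h*p + c*e*s)) * h3
end

section
/- With d, q, f, g, p, e defined by d = bh(a-s)/(bh-cr), q = cr(a-s)/(bh-cr), f = ra(c-h)/(ra-sb), g = sb(c-h)/(ra-sb), p = -cs(b-r)/(ah-cs), e = -ah(b-r)/(ah-cs), the expression c² - q² - p² + (pq/(sr))(h² - r² - s²) has numerator (after clearing denominators) equal, up to the nonzero factor c²(bh-cr)⁻²(ah-cs)⁻², to (bhs + ahr - crs - rsh)·B, where B = abc(h²+s²+r²) - hsr(a²+b²+c²) + (csb(h²+r²-s²) - hra(b²+c²-a²)) + (ahb(s²+r²-h²) - src(a²+b²-c²)) + (cra(s²+h²-r²) - shb(a²+c²-b²)).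 -/
theorem numerator_identity_with_B111
    (a b c r s h d q f g p e B : ℝ)
    (hc : c ≠ 0) (hs : s ≠ 0) (hr : r ≠ 0)
    (h1 : b * h ≠ c * r) (h2 : r * a ≠ s * b) (h3 : a * h ≠ c * s)
    (hd : d = b * h * (a - s) / (b * h - c * r))
    (hq : q = c * r * (a - s) / (b * h - c * r))
    (hf : f = r * a * (c - h) / (r * a - s * b))
    (hg : g = s * b * (c - h) / (r * a - s * b))
    (hp : p = -(c * s * (b - r)) / (a * h - c * s))
    (he : e = -(a * h * (b - r)) / (a * h - c * s))
    (hB : B = a * b * c * (h ^ 2 + s ^ 2 + r ^ 2) - h * s * r * (a ^ 2 + b ^ 2 + c ^ 2)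
      + (c * s * b * (h ^ 2 + r ^ 2 - s ^ 2) - h * r * a * (b ^ 2 + c ^ 2 - a ^ 2))
      + (a * h * b * (s ^ 2 + r ^ 2 - h ^ 2) - s * r * c * (a ^ 2 + b ^ 2 - c ^ 2))
      + (c * r * a * (s ^ 2 + h ^ 2 - r ^ 2) - s * h * b * (a ^ 2 + c ^ 2 - b ^ 2))) :
    (c ^ 2 - q ^ 2 - p ^ 2 + (p * q / (s * r)) * (h ^ 2 - r ^ 2 - s ^ 2)) *
      (b * h - c * r) ^ 2 * (a * h - c * s) ^ 2 * (s * r) =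
    -(s * r) * (c ^ 2 * (b * h * s + a * h * r - c * r * s - r * s * h) * B) := by
  have hbc : b * h - c * r ≠ 0 := sub_ne_zero.mpr h1
  have hac : a * h - c * s ≠ 0 := sub_ne_zero.mpr h3
  subst hq hp hB
  field_simp
  ring
end
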